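/- In the setting of the single-context doubly-robust estimator Ẑ = (π(A)/μ(A))·(r(A) - Q(A)) + V_π with V_π = ∑_a π(a) Q(a), the variance satisfies Var[Ẑ] = ∑_a (π(a) r(a) - F(a))²/μ(a) - (∑_a (π(a) r(a) - F(a)))², where F(a) = π(a) Q(a); equivalently Var[Ẑ] = ‖π·r - F‖²_M for M = diag(1/μ(a)) - J. -/

import Mathlib

open Matrix BigOperators

/-- Expectation of `f A` for `A ~ μ` on `Fin K`. -/
def expec {K : ℕ} (μ : Fin K → ℝ) (f : Fin K → ℝ) : ℝ := ∑ a, μ a * f a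

/-- Variance of `f A` for `A ~ μ`. -/
def variance' {K : ℕ} (μ : Fin K → ℝ) (f : Fin K → ℝ) : ℝ :=
  expec μ (fun a => (f a - expec μ f) ^ 2)

lemma var_key {K : ℕ} (μ : Fin K → ℝ) (hμpos : ∀ a, 0 < μ a) (hμsum : ∑ a, μ a = 1)
    (g : Fin K → ℝ) (V : ℝ) :
    variance' μ (fun a => g a / μ a + V) = (∑ a, (g a) ^ 2 / μ a) - (∑ a, g a) ^ 2 := by
  have hne : ∀ a, μ a ≠ 0 := fun a => (hμpos a).ne'
  have hE : expec μ (fun a => g a / μ a + V) = (∑ a, g a) + V := by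
    unfold expec
    beta_reduce
    have h1 : ∀ a : Fin K, μ a * (g a / μ a + V) = g a + μ a * V := by
      intro a; field_simp [hne a]
    simp only [h1]
    rw [Finset.sum_add_distrib, ← Finset.sum_mul, hμsum, one_mul]
  unfold variance' expec at hE ⊢
  beta_reduce at hE ⊢
  rw [hE]
  have h2 : ∀ a : Fin K,
      μ a * (g a / μ a + V - ((∑ a, g a) + V)) ^ 2
        = g a ^ 2 / μ a - 2 * g a * (∑ a, g a) + μ a * (∑ a, g a) ^ 2 := by
    intro a; field_simp [hne a]; ring
  simp only [h2]
  rw [Finset.sum_add_distrib, Finset.sum_sub_distrib, ← Finset.sum_mul,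
    ← Finset.sum_mul, hμsum, ← Finset.mul_sum]
  ring

lemma aux_sum {K : ℕ} (μ g : Fin K → ℝ) :
    ∑ x, (g x ^ 2 / μ x - ∑ i, g x * g i)
      = (∑ x, g x ^ 2 / μ x) - (∑ x, g x) ^ 2 := by
  rw [Finset.sum_sub_distrib, pow_two, Finset.sum_mul_sum]

/-- variance of the single-context DR estimator:
`Var[Ẑ] = ∑_a (π(a)r(a) - F(a))²/μ(a) - (∑_a (π(a)r(a) - F(a)))²
        = ‖π·r - F‖²_M` where `F(a) = π(a)Q(a)` and `M = diag(1/μ) - J`. -/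
theorem stmt_4 (K : ℕ) (hK : 1 ≤ K) (μ π : Fin K → ℝ)
    (hμpos : ∀ a, 0 < μ a) (hμsum : ∑ a, μ a = 1)
    (hπnonneg : ∀ a, 0 ≤ π a) (hπsum : ∑ a, π a = 1)
    (r Q : Fin K → ℝ) (F : Fin K → ℝ) (hF : ∀ a, F a = π a * Q a) :
    variance' μ (fun a => π a / μ a * (r a - Q a) + ∑ b, π b * Q b)
        = (∑ a, (π a * r a - F a) ^ 2 / μ a)
            - (∑ a, (π a * r a - F a)) ^ 2 ∧
      variance' μ (fun a => π a / μ a * (r a - Q a) + ∑ b, π b * Q b)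
        = (fun a => π a * r a - F a) ⬝ᵥ
            ((Matrix.diagonal (fun a => (μ a)⁻¹)
              - Matrix.of (fun _ _ : Fin K => (1 : ℝ))) *ᵥ
              (fun a => π a * r a - F a)) := by
  have hne : ∀ a, μ a ≠ 0 := fun a => (hμpos a).ne'
  set g : Fin K → ℝ := fun a => π a * r a - F a with hg
  have hfun : (fun a => π a / μ a * (r a - Q a) + ∑ b, π b * Q b)
      = fun a => g a / μ a + ∑ b, π b * Q b := by
    funext a
    simp only [hg, hF]
    field_simp
  have h1 : variance' μ (fun a => π a / μ a * (r a - Q a) + ∑ b, π b * Q b)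
      = (∑ a, (g a) ^ 2 / μ a) - (∑ a, g a) ^ 2 := by
    rw [hfun]; exact var_key μ hμpos hμsum g _
  refine ⟨h1, h1.trans ?_⟩
  simp only [dotProduct, sub_mulVec, mulVec, dotProduct, diagonal, of_apply,
    Matrix.sub_apply]
  have h3 : ∀ x : Fin K,
      ∑ i, g x * (((if x = i then (μ x)⁻¹ else 0) - 1) * g i)
        = g x ^ 2 / μ x - g x * ∑ i, g i := by
    intro x
    have : ∀ i : Fin K, g x * (((if x = i then (μ x)⁻¹ else 0) - 1) * g i)
        = (if x = i then g x ^ 2 / μ x else 0) - g x * g i := by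
      intro i
      by_cases h : x = i
      · subst h; rw [if_pos rfl, if_pos rfl]; ring
      · simp [h]
    simp only [this]
    rw [Finset.sum_sub_distrib, Finset.sum_ite_eq, ← Finset.mul_sum]
    simp
  simp only [Finset.mul_sum, h3]
  exact (aux_sum μ g).symm
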